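/- arXiv:1909.07298 — 8 statements merged into one kernel-verified Lean document; each statement's English description precedes it below -/
import Mathlib

section
/- For every integer d ≥ 4 and reals μ > 0, C > 0, E, the effective potential V_eff(r) := (C/r²)(1 − μ r^(3−d)) − E² is strictly increasing on the interval (0, r_P] and strictly decreasing on [r_P, ∞), where r_P := (μ(d−1)/2)^(1/(d−3)); consequently r_P is the unique critical point of V_eff on (0,∞) and V_eff attains its strict global maximum over (0,∞) at r = r_P. -/
/-- For every integer `d ≥ 4` and reals `μ > 0`, `C > 0`, `E`, the effective potential
`V_eff(r) = (C/r²)(1 − μ r^(3−d)) − E²` is strictly increasing on `(0, r_P]` and strictly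
decreasing on `[r_P, ∞)`, where `r_P = (μ(d−1)/2)^(1/(d−3))`; consequently `r_P` is the
unique critical point of `V_eff` on `(0,∞)` and `V_eff` attains its strict global maximum
over `(0,∞)` at `r = r_P`. -/
theorem effective_potential_monotonicity (d : ℕ) (hd : 4 ≤ d) (μ C E : ℝ)
    (hμ : 0 < μ) (hC : 0 < C)
    (Veff : ℝ → ℝ)
    (hV : ∀ r : ℝ, Veff r = (C / r ^ 2) * (1 - μ * r ^ ((3 : ℝ) - d)) - E ^ 2)
    (rP : ℝ) (hrP : rP = (μ * ((d : ℝ) - 1) / 2) ^ ((1 : ℝ) / ((d : ℝ) - 3))) :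
    StrictMonoOn Veff (Set.Ioc 0 rP) ∧
    StrictAntiOn Veff (Set.Ici rP) ∧
    (∀ r : ℝ, 0 < r → (deriv Veff r = 0 ↔ r = rP)) ∧
    (∀ r : ℝ, 0 < r → r ≠ rP → Veff r < Veff rP) := by
  have hVf : Veff = fun r => (C / r ^ 2) * (1 - μ * r ^ ((3 : ℝ) - d)) - E ^ 2 := funext hV
  set D : ℝ := (d : ℝ) with hD
  have hD4 : (4 : ℝ) ≤ D := by rw [hD]; exact_mod_cast hd
  have hD3 : (0 : ℝ) < D - 3 := by linarith
  have hD1 : (0 : ℝ) < D - 1 := by linarith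
  set A : ℝ := μ * (D - 1) / 2 with hAdef
  have hA : 0 < A := by positivity
  have hrPpos : 0 < rP := by rw [hrP]; exact Real.rpow_pos_of_pos hA _
  have hrPpow : rP ^ (D - 3) = A := by
    rw [hrP, ← Real.rpow_mul hA.le, one_div_mul_cancel hD3.ne', Real.rpow_one]
  set F' : ℝ → ℝ := fun r => -2 * C * r ^ (-(3 : ℝ)) + C * μ * (D - 1) * r ^ (-D) with hF'
  have hderiv : ∀ r : ℝ, 0 < r → HasDerivAt Veff (F' r) r := by
    intro r hr
    have hev : (fun x : ℝ => C * x ^ (-(2 : ℝ)) - C * μ * x ^ ((1 : ℝ) - D) - E ^ 2) =ᶠ[nhds r] Veff := by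
      filter_upwards [Ioi_mem_nhds hr] with x hx
      have hx0 : (0 : ℝ) < x := hx
      rw [hVf]
      have h1 : x ^ (-(2 : ℝ)) = (x ^ 2)⁻¹ := by
        rw [Real.rpow_neg hx0.le, show ((2:ℝ)) = ((2:ℕ):ℝ) by norm_num, Real.rpow_natCast]
      have h2 : x ^ ((1 : ℝ) - D) = x ^ (-(2 : ℝ)) * x ^ ((3 : ℝ) - D) := by
        rw [← Real.rpow_add hx0]; ring_nf
      rw [h2, h1]
      ring
    have h₁ : HasDerivAt (fun x : ℝ => x ^ (-(2 : ℝ))) (-(2 : ℝ) * r ^ (-(2 : ℝ) - 1)) r :=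
      Real.hasDerivAt_rpow_const (Or.inl hr.ne')
    have h₂ : HasDerivAt (fun x : ℝ => x ^ ((1 : ℝ) - D)) (((1 : ℝ) - D) * r ^ ((1 : ℝ) - D - 1)) r :=
      Real.hasDerivAt_rpow_const (Or.inl hr.ne')
    have h := ((h₁.const_mul C).sub (h₂.const_mul (C * μ))).sub_const (E ^ 2)
    have h' := h.congr_of_eventuallyEq hev.symm
    have heq : C * (-(2 : ℝ) * r ^ (-(2 : ℝ) - 1)) - C * μ * (((1 : ℝ) - D) * r ^ ((1 : ℝ) - D - 1)) = F' r := by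
      rw [show (-(2 : ℝ)) - 1 = -(3 : ℝ) by norm_num, show (1 : ℝ) - D - 1 = -D by ring, hF']
      ring
    exact heq ▸ h'
  have hfac : ∀ r : ℝ, 0 < r → F' r = C * r ^ (-D) * (μ * (D - 1) - 2 * r ^ (D - 3)) := by
    intro r hr
    have h3 : r ^ (-(3 : ℝ)) = r ^ (-D) * r ^ (D - 3) := by
      rw [← Real.rpow_add hr]; ring_nf
    rw [hF']
    simp only [h3]
    ring
  have hlt : ∀ r : ℝ, 0 < r → r < rP → 0 < F' r := by
    intro r hr hlt
    rw [hfac r hr]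
    have h1 : r ^ (D - 3) < A := by
      rw [← hrPpow]; exact Real.rpow_lt_rpow hr.le hlt hD3
    have h2 : 0 < r ^ (-D) := Real.rpow_pos_of_pos hr _
    have h3 : 0 < μ * (D - 1) - 2 * r ^ (D - 3) := by rw [hAdef] at h1; linarith
    positivity
  have hgt : ∀ r : ℝ, 0 < r → rP < r → F' r < 0 := by
    intro r hr hgt
    rw [hfac r hr]
    have h1 : A < r ^ (D - 3) := by
      rw [← hrPpow]; exact Real.rpow_lt_rpow hrPpos.le hgt hD3
    have h2 : 0 < r ^ (-D) := Real.rpow_pos_of_pos hr _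
    have h3 : μ * (D - 1) - 2 * r ^ (D - 3) < 0 := by rw [hAdef] at h1; linarith
    exact mul_neg_of_pos_of_neg (by positivity) h3
  have heq0 : ∀ r : ℝ, 0 < r → (F' r = 0 ↔ r = rP) := by
    intro r hr
    constructor
    · intro h0
      rcases lt_trichotomy r rP with h | h | h
      · exact absurd h0 (ne_of_gt (hlt r hr h))
      · exact h
      · exact absurd h0 (ne_of_lt (hgt r hr h))
    · rintro rfl
      rw [hfac r hr, hrPpow, hAdef]
      ring
  have hcont1 : ContinuousOn Veff (Set.Ioc 0 rP) := fun x hx =>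
    (hderiv x hx.1).differentiableAt.continuousAt.continuousWithinAt
  have hcont2 : ContinuousOn Veff (Set.Ici rP) := fun x hx =>
    (hderiv x (lt_of_lt_of_le hrPpos hx)).differentiableAt.continuousAt.continuousWithinAt
  have hmono : StrictMonoOn Veff (Set.Ioc 0 rP) := by
    apply strictMonoOn_of_deriv_pos (convex_Ioc 0 rP) hcont1
    intro x hx
    rw [interior_Ioc] at hx
    rw [(hderiv x hx.1).deriv]
    exact hlt x hx.1 hx.2
  have hanti : StrictAntiOn Veff (Set.Ici rP) := by
    apply strictAntiOn_of_deriv_neg (convex_Ici rP) hcont2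
    intro x hx
    rw [interior_Ici] at hx
    rw [(hderiv x (hrPpos.trans hx)).deriv]
    exact hgt x (hrPpos.trans hx) hx
  refine ⟨hmono, hanti, fun r hr => ?_, fun r hr hne => ?_⟩
  · rw [(hderiv r hr).deriv]; exact heq0 r hr
  · rcases lt_or_gt_of_ne hne with h | h
    · exact hmono ⟨hr, h.le⟩ ⟨hrPpos, le_refl _⟩ h
    · exact hanti (Set.self_mem_Ici) h.le h
end

section
/- Fix an integer d ≥ 4 and reals μ > 0, C > 0, E. If r₁ and r₂ are reals with r_H < r₁ < r₂ and V_eff(r₁) = V_eff(r₂) = 0, where r_H := μ^(1/(d−3)) and V_eff(r) := (C/r²)(1 − μ r^(3−d)) − E², then r₁ < r_P < r₂ and V_eff(r_P) > 0 (equivalently, R(r_P) < 0 where R(r) := −r⁴ V_eff(r)), with r_P := (μ(d−1)/2)^(1/(d−3)). -/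
/-- Fix an integer `d ≥ 4` and reals `μ > 0`, `C > 0`, `E`. If `r₁` and `r₂` are reals with
`r_H < r₁ < r₂` and `V_eff(r₁) = V_eff(r₂) = 0`, then `r₁ < r_P < r₂` and `V_eff(r_P) > 0`
(equivalently, `R(r_P) < 0` where `R(r) = −r⁴ V_eff(r)`). -/
theorem two_zeros_straddle_photon_sphere (d : ℕ) (hd : 4 ≤ d) (μ C E : ℝ)
    (hμ : 0 < μ) (hC : 0 < C)
    (Veff : ℝ → ℝ)
    (hV : ∀ r : ℝ, Veff r = (C / r ^ 2) * (1 - μ * r ^ ((3 : ℝ) - d)) - E ^ 2)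
    (rH : ℝ) (hrH : rH = μ ^ ((1 : ℝ) / ((d : ℝ) - 3)))
    (rP : ℝ) (hrP : rP = (μ * ((d : ℝ) - 1) / 2) ^ ((1 : ℝ) / ((d : ℝ) - 3)))
    (r₁ r₂ : ℝ) (h₁ : rH < r₁) (h₁₂ : r₁ < r₂)
    (hz₁ : Veff r₁ = 0) (hz₂ : Veff r₂ = 0) :
    r₁ < rP ∧ rP < r₂ ∧ 0 < Veff rP ∧ -(rP ^ 4 * Veff rP) < 0 := by
  obtain ⟨n, rfl⟩ : ∃ n : ℕ, d = n + 4 := ⟨d - 4, by omega⟩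
  have hcast3 : ((n + 4 : ℕ) : ℝ) - 3 = ((n + 1 : ℕ) : ℝ) := by push_cast; ring
  have hcast1 : μ * (((n + 4 : ℕ) : ℝ) - 1) / 2 = μ * ((n : ℝ) + 3) / 2 := by push_cast; ring
  have hbase : (0 : ℝ) < μ * ((n : ℝ) + 3) / 2 := by positivity
  have hrP' : rP = (μ * ((n : ℝ) + 3) / 2) ^ (((n + 1 : ℕ) : ℝ))⁻¹ := by
    rw [hrP, hcast1, hcast3, one_div]
  have hrPpos : 0 < rP := by rw [hrP']; exact Real.rpow_pos_of_pos hbase _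
  have hrPn : rP ^ (n + 1) = μ * ((n : ℝ) + 3) / 2 := by
    rw [hrP']; exact Real.rpow_inv_natCast_pow hbase.le (by omega)
  have hrHpos : 0 < rH := by rw [hrH]; exact Real.rpow_pos_of_pos hμ _
  have hr₁pos : 0 < r₁ := hrHpos.trans h₁
  have hr₂pos : 0 < r₂ := hr₁pos.trans h₁₂
  set g : ℝ → ℝ := fun r => C * (r ^ 2)⁻¹ - C * μ * (r ^ (n + 3))⁻¹ with hg
  have hVg : ∀ r : ℝ, 0 < r → Veff r = g r - E ^ 2 := by
    intro r hr
    have hpow : r ^ ((3 : ℝ) - ((n + 4 : ℕ) : ℝ)) = (r ^ (n + 1))⁻¹ := by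
      have h : (3 : ℝ) - ((n + 4 : ℕ) : ℝ) = -((n + 1 : ℕ) : ℝ) := by push_cast; ring
      rw [h, Real.rpow_neg hr.le, Real.rpow_natCast]
    rw [hV, hpow, hg]
    have h1 : r ^ 2 ≠ 0 := by positivity
    have h2 : r ^ (n + 1) ≠ 0 := by positivity
    have h3 : r ^ (n + 3) ≠ 0 := by positivity
    field_simp
    ring
  have hderiv : ∀ r : ℝ, 0 < r →
      HasDerivAt g (C * (μ * ((n : ℝ) + 3) - 2 * r ^ (n + 1)) / r ^ (n + 4)) r := by
    intro r hr
    have h2 : r ^ 2 ≠ 0 := by positivity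
    have h3 : r ^ (n + 3) ≠ 0 := by positivity
    have hA := ((hasDerivAt_pow 2 r).inv h2).const_mul C
    have hB := ((hasDerivAt_pow (n + 3) r).inv h3).const_mul (C * μ)
    have h := hA.sub hB
    convert h using 1
    case e'_4 => rfl
    case e'_5 => rfl
    case e'_8 => rfl
    have e1 : n + 3 - 1 = n + 2 := rfl
    rw [e1]
    push_cast
    field_simp
    ring
  have hmono : StrictMonoOn g (Set.Ioc 0 rP) := by
    apply strictMonoOn_of_deriv_pos (convex_Ioc 0 rP)
    · intro x hx
      exact ((hderiv x hx.1).continuousAt).continuousWithinAt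
    · intro x hx
      rw [interior_Ioc] at hx
      rw [(hderiv x hx.1).deriv]
      have hxn : x ^ (n + 1) < μ * ((n : ℝ) + 3) / 2 := by
        calc x ^ (n + 1) < rP ^ (n + 1) := by
              exact pow_lt_pow_left₀ hx.2 hx.1.le (by omega)
          _ = _ := hrPn
      have hpos : 0 < μ * ((n : ℝ) + 3) - 2 * x ^ (n + 1) := by linarith
      exact div_pos (mul_pos hC hpos) (pow_pos hx.1 _)
  have hanti : StrictAntiOn g (Set.Ici rP) := by
    apply strictAntiOn_of_deriv_neg (convex_Ici rP)
    · intro x hx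
      exact ((hderiv x (hrPpos.trans_le hx)).continuousAt).continuousWithinAt
    · intro x hx
      rw [interior_Ici] at hx
      have hxpos := hrPpos.trans hx
      rw [(hderiv x hxpos).deriv]
      have hxn : μ * ((n : ℝ) + 3) / 2 < x ^ (n + 1) := by
        calc μ * ((n : ℝ) + 3) / 2 = rP ^ (n + 1) := hrPn.symm
          _ < x ^ (n + 1) := pow_lt_pow_left₀ hx hrPpos.le (by omega)
      have hneg : C * (μ * ((n : ℝ) + 3) - 2 * x ^ (n + 1)) < 0 :=
        mul_neg_of_pos_of_neg hC (by linarith)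
      exact div_neg_of_neg_of_pos hneg (pow_pos hxpos _)
  have hE1 : g r₁ = E ^ 2 := by
    have h := hVg r₁ hr₁pos
    rw [hz₁] at h
    linarith
  have hE2 : g r₂ = E ^ 2 := by
    have h := hVg r₂ hr₂pos
    rw [hz₂] at h
    linarith
  have h1P : r₁ < rP := by
    by_contra h
    push_neg at h
    have := hanti (Set.mem_Ici.mpr h) (Set.mem_Ici.mpr (h.trans h₁₂.le)) h₁₂
    rw [hE1, hE2] at this
    exact lt_irrefl _ this
  have hP2 : rP < r₂ := by
    by_contra h
    push_neg at h
    have := hmono ⟨hr₁pos, h₁₂.le.trans h⟩ ⟨hr₂pos, h⟩ h₁₂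
    rw [hE1, hE2] at this
    exact lt_irrefl _ this
  have hVP : 0 < Veff rP := by
    have hlt : g r₁ < g rP := hmono ⟨hr₁pos, h1P.le⟩ ⟨hrPpos, le_refl _⟩ h1P
    rw [hE1] at hlt
    rw [hVg rP hrPpos]
    linarith
  exact ⟨h1P, hP2, hVP, neg_lt_zero.mpr (mul_pos (pow_pos hrPpos 4) hVP)⟩
end

section
/- Fix an integer d ≥ 4 and reals μ > 0, C > 0, E with E ≠ 0. If V_eff(r_P) > 0, where V_eff(r) := (C/r²)(1 − μ r^(3−d)) − E² and r_P := (μ(d−1)/2)^(1/(d−3)), then there exist reals r₁ and r₂ with r_H < r₁ < r_P < r₂ (r_H := μ^(1/(d−3))) such that V_eff(r₁) = 0 and V_eff(r₂) = 0. -/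
/-- Fix an integer `d ≥ 4` and reals `μ > 0`, `C > 0`, `E` with `E ≠ 0`. If `V_eff(r_P) > 0`,
then there exist reals `r₁` and `r₂` with `r_H < r₁ < r_P < r₂` such that `V_eff(r₁) = 0`
and `V_eff(r₂) = 0`. -/
theorem exists_two_zeros_of_pos_max (d : ℕ) (hd : 4 ≤ d) (μ C E : ℝ)
    (hμ : 0 < μ) (hC : 0 < C) (hE : E ≠ 0)
    (Veff : ℝ → ℝ)
    (hV : ∀ r : ℝ, Veff r = (C / r ^ 2) * (1 - μ * r ^ ((3 : ℝ) - d)) - E ^ 2)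
    (rH : ℝ) (hrH : rH = μ ^ ((1 : ℝ) / ((d : ℝ) - 3)))
    (rP : ℝ) (hrP : rP = (μ * ((d : ℝ) - 1) / 2) ^ ((1 : ℝ) / ((d : ℝ) - 3)))
    (hpos : 0 < Veff rP) :
    ∃ r₁ r₂ : ℝ, rH < r₁ ∧ r₁ < rP ∧ rP < r₂ ∧ Veff r₁ = 0 ∧ Veff r₂ = 0 := by
  have hd3 : (0 : ℝ) < (d : ℝ) - 3 := by
    have : (4 : ℝ) ≤ (d : ℝ) := by exact_mod_cast hd
    linarith
  have hE2 : 0 < E ^ 2 := by positivity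
  -- rH and rP are positive
  have hrHpos : 0 < rH := by rw [hrH]; exact Real.rpow_pos_of_pos hμ _
  have hμd : μ < μ * ((d : ℝ) - 1) / 2 := by
    have h4 : (4 : ℝ) ≤ (d : ℝ) := by exact_mod_cast hd
    have h1 : (3 : ℝ) ≤ (d : ℝ) - 1 := by linarith
    nlinarith
  have hrPpos : 0 < rP := by
    rw [hrP]; exact Real.rpow_pos_of_pos (by linarith) _
  have hHP : rH < rP := by
    rw [hrH, hrP]
    exact Real.rpow_lt_rpow hμ.le hμd (by positivity)
  -- Veff rH = -E^2
  have hVH : Veff rH = -E ^ 2 := by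
    rw [hV, hrH, ← Real.rpow_natCast (μ ^ ((1:ℝ)/((d:ℝ)-3))) 2, ← Real.rpow_mul hμ.le,
      ← Real.rpow_mul hμ.le]
    have h1 : (1:ℝ)/((d:ℝ)-3) * ((3:ℝ) - d) = -1 := by
      field_simp
      ring
    rw [h1, Real.rpow_neg_one, mul_inv_cancel₀ (ne_of_gt hμ)]
    ring
  -- continuity on positives
  have hcont : ContinuousOn Veff (Set.Ioi (0:ℝ)) := by
    have heq : Veff = fun r => (C / r ^ 2) * (1 - μ * r ^ ((3 : ℝ) - d)) - E ^ 2 :=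
      funext hV
    rw [heq]
    apply ContinuousOn.sub _ continuousOn_const
    apply ContinuousOn.mul
    · exact ContinuousOn.div continuousOn_const (continuousOn_pow 2)
        (fun x hx => pow_ne_zero 2 (ne_of_gt hx))
    · apply ContinuousOn.sub continuousOn_const
      apply ContinuousOn.mul continuousOn_const
      exact fun x hx =>
        (Real.continuousAt_rpow_const x _ (Or.inl (ne_of_gt hx))).continuousWithinAt
  -- first zero, between rH and rP
  have hsub1 : Set.Icc rH rP ⊆ Set.Ioi (0:ℝ) := fun x hx => lt_of_lt_of_le hrHpos hx.1
  have hIVT1 := intermediate_value_Icc hHP.le (hcont.mono hsub1)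
  have h0mem : (0:ℝ) ∈ Set.Icc (Veff rH) (Veff rP) := ⟨by rw [hVH]; linarith, hpos.le⟩
  obtain ⟨r₁, hr₁mem, hr₁⟩ := hIVT1 h0mem
  have hr₁lt : rH < r₁ := lt_of_le_of_ne hr₁mem.1 (by
    rintro rfl; rw [hVH] at hr₁; nlinarith)
  have hr₁lt2 : r₁ < rP := lt_of_le_of_ne hr₁mem.2 (by
    rintro rfl; rw [hr₁] at hpos; exact lt_irrefl 0 hpos)
  -- large R with Veff R < 0
  set R : ℝ := max (rP + 1) (Real.sqrt (C / E ^ 2) + 1) with hR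
  have hRgtP : rP < R := lt_of_lt_of_le (by linarith) (le_max_left _ _)
  have hRpos : 0 < R := lt_trans hrPpos hRgtP
  have hRsq : C / R ^ 2 < E ^ 2 := by
    have hRs : Real.sqrt (C / E ^ 2) < R := by
      have := le_max_right (rP + 1) (Real.sqrt (C / E ^ 2) + 1)
      linarith
    have hsq : C / E ^ 2 < R ^ 2 := by
      have h1 : Real.sqrt (C / E ^ 2) ^ 2 = C / E ^ 2 := Real.sq_sqrt (by positivity)
      nlinarith [Real.sqrt_nonneg (C / E ^ 2)]
    rw [div_lt_iff₀ hE2] at hsq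
    rw [div_lt_iff₀ (by positivity)]
    nlinarith
  have hVR : Veff R < 0 := by
    rw [hV]
    have hrw : (0:ℝ) < μ * R ^ ((3:ℝ) - d) :=
      mul_pos hμ (Real.rpow_pos_of_pos hRpos _)
    have h1 : (C / R ^ 2) * (1 - μ * R ^ ((3:ℝ) - d)) ≤ C / R ^ 2 := by
      nlinarith [div_pos hC (pow_pos hRpos 2)]
    linarith
  -- second zero, between rP and R
  have hsub2 : Set.Icc rP R ⊆ Set.Ioi (0:ℝ) := fun x hx => lt_of_lt_of_le hrPpos hx.1
  have hIVT2 := intermediate_value_Icc' hRgtP.le (hcont.mono hsub2)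
  have h0mem2 : (0:ℝ) ∈ Set.Icc (Veff R) (Veff rP) := ⟨hVR.le, hpos.le⟩
  obtain ⟨r₂, hr₂mem, hr₂⟩ := hIVT2 h0mem2
  have hr₂gt : rP < r₂ := lt_of_le_of_ne hr₂mem.1 (by
    rintro rfl; rw [hr₂] at hpos; exact lt_irrefl 0 hpos)
  exact ⟨r₁, r₂, hr₁lt, hr₁lt2, hr₂gt, hr₁, hr₂⟩
end

section
/- Let f : ℝ → ℝ be differentiable and let g : ℝ → ℝ be continuous. Suppose (f′(s))² = g(f(s)) for every s ∈ ℝ, and suppose the range of f is bounded (above and below) and nonempty. Then g vanishes at the infimum of the range of f and at the supremum of the range of f: g(inf range f) = 0 and g(sup range f) = 0. -/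
open Set Filter Topology

/-- Auxiliary growth lemma: if `f ≤ M`, `g ≥ c > 0` on the zone `(M - δ, M]`,
and at some point `s₀` we have `f s₀ > M - δ` with `deriv f s₀ > 0`, we get a
contradiction: `f` would be forced to grow past `M`. -/
lemma aux_pos_deriv (f g : ℝ → ℝ) (hf : Differentiable ℝ f)
    (hfg : ∀ s : ℝ, (deriv f s) ^ 2 = g (f s))
    (M δ c : ℝ) (hc : 0 < c)
    (hle : ∀ s, f s ≤ M)
    (hzone : ∀ y, M - δ < y → y ≤ M → c ≤ g y)
    (s₀ : ℝ) (hs₀ : M - δ < f s₀) (hd₀ : 0 < deriv f s₀) : False := by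
  set b := Real.sqrt c with hbdef
  have hb : 0 < b := Real.sqrt_pos.2 hc
  -- in the zone, |f'| ≥ b
  have habs : ∀ u : ℝ, M - δ < f u → b ≤ |deriv f u| := by
    intro u hu
    have h1 : c ≤ (deriv f u) ^ 2 := by rw [hfg u]; exact hzone _ hu (hle u)
    have := Real.sqrt_le_sqrt h1
    rwa [Real.sqrt_sq_eq_abs] at this
  have hne0 : ∀ u : ℝ, M - δ < f u → deriv f u ≠ 0 := by
    intro u hu h0
    have := habs u hu
    rw [h0, abs_zero] at this
    linarith
  -- the comparison function
  set ψ : ℝ → ℝ := fun u => f s₀ + b * (u - s₀) with hψdef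
  -- choose t₁ where ψ exceeds M
  set t₁ : ℝ := s₀ + (M - f s₀ + 1) / b with ht₁def
  have hMf : 0 < M - f s₀ + 1 := by have := hle s₀; linarith
  have hs₀t₁ : s₀ < t₁ := by
    have : 0 < (M - f s₀ + 1) / b := div_pos hMf hb
    simp only [ht₁def]; linarith
  have hψt₁ : M < ψ t₁ := by
    have : ψ t₁ = f s₀ + (M - f s₀ + 1) := by
      simp only [hψdef, ht₁def]
      field_simp
      ring
    rw [this]; linarith
  have hφt₁ : f t₁ < ψ t₁ := lt_of_le_of_lt (hle t₁) hψt₁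
  -- the set of "good" times
  set S : Set ℝ := {t | t ∈ Icc s₀ t₁ ∧ ∀ u ∈ Icc s₀ t, ψ u ≤ f u} with hSdef
  have hs₀S : s₀ ∈ S := by
    refine ⟨⟨le_refl _, hs₀t₁.le⟩, ?_⟩
    intro u hu
    have : u = s₀ := le_antisymm hu.2 hu.1
    simp [this, hψdef]
  have hSne : S.Nonempty := ⟨s₀, hs₀S⟩
  have hSbdd : BddAbove S := ⟨t₁, fun t ht => ht.1.2⟩
  set T : ℝ := sSup S with hTdef
  have hs₀T : s₀ ≤ T := le_csSup hSbdd hs₀S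
  have hTt₁ : T ≤ t₁ := csSup_le hSne (fun t ht => ht.1.2)
  -- T ∈ S
  have hTS : T ∈ S := by
    refine ⟨⟨hs₀T, hTt₁⟩, ?_⟩
    intro u hu
    rcases lt_or_eq_of_le hu.2 with hlt | heq
    · obtain ⟨t, htS, hut⟩ := exists_lt_of_lt_csSup hSne hlt
      exact htS.2 u ⟨hu.1, hut.le⟩
    · rcases eq_or_lt_of_le hu.1 with heq2 | hlt2
      · simp [← heq2, hψdef]
      · -- continuity argument at u = T
        have hcont : Tendsto (fun x => f x - ψ x) (𝓝[<] u) (𝓝 (f u - ψ u)) := by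
          apply Tendsto.mono_left
          · exact ((hf.continuous.sub (by continuity)).continuousAt).tendsto
          · exact nhdsWithin_le_nhds
        have hev : ∀ᶠ x in 𝓝[<] u, 0 ≤ f x - ψ x := by
          filter_upwards [Ioo_mem_nhdsLT_of_mem (Set.mem_Ioc.2 ⟨hlt2, le_refl u⟩)] with x hx
          have hxT : x < T := heq ▸ hx.2
          obtain ⟨t, htS, hxt⟩ := exists_lt_of_lt_csSup hSne hxT
          have := htS.2 x ⟨hx.1.le, hxt.le⟩
          linarith
        have := ge_of_tendsto hcont hev
        linarith
  -- T < t₁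
  have hTlt : T < t₁ := by
    rcases lt_or_eq_of_le hTt₁ with h | h
    · exact h
    · exfalso
      have := hTS.2 t₁ ⟨hs₀t₁.le, h.symm.le⟩
      linarith
  -- f T is in the zone
  have hψT : f s₀ ≤ ψ T := by
    simp only [hψdef]
    nlinarith
  have hfT : M - δ < f T := lt_of_lt_of_le hs₀ (le_trans hψT (hTS.2 T ⟨hs₀T, le_refl T⟩))
  -- pick ε so that f stays in the zone on [T, T+ε]
  have hcf : ContinuousAt f T := hf.continuous.continuousAt
  obtain ⟨ε₀, hε₀, hball⟩ := Metric.continuousAt_iff.1 hcf (f T - (M - δ)) (by linarith)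
  set ε : ℝ := min (ε₀ / 2) (t₁ - T) with hεdef
  have hε : 0 < ε := lt_min (by linarith) (by linarith)
  have hεε₀ : ε < ε₀ := lt_of_le_of_lt (min_le_left _ _) (by linarith)
  -- zone coverage on [s₀, T+ε]
  have hzone2 : ∀ u ∈ Icc s₀ (T + ε), M - δ < f u := by
    intro u hu
    rcases le_or_gt u T with h | h
    · have := hTS.2 u ⟨hu.1, h⟩
      have h2 : f s₀ ≤ ψ u := by simp only [hψdef]; nlinarith [hu.1]
      linarith
    · have hdist : dist u T < ε₀ := by
        rw [Real.dist_eq, abs_of_pos (by linarith : (0:ℝ) < u - T)]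
        have := hu.2
        linarith
      have := hball hdist
      rw [Real.dist_eq] at this
      have := abs_lt.1 this
      linarith [this.1]
  -- Darboux: deriv f > 0 on [s₀, T+ε], hence ≥ b
  have hTε : s₀ ≤ T + ε := by linarith
  have hderivpos : ∀ u ∈ Icc s₀ (T + ε), b ≤ deriv f u := by
    intro u hu
    have hne := hne0 u (hzone2 u hu)
    have habs' := habs u (hzone2 u hu)
    rcases lt_trichotomy (deriv f u) 0 with hneg | h0 | hpos
    · exfalso
      -- Darboux gives a zero of deriv f between s₀ and u
      have hsu : s₀ ≤ u := hu.1
      have hd : ∀ x ∈ Icc s₀ u, HasDerivWithinAt f (deriv f x) (Icc s₀ u) x :=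
        fun x _ => (hf x).hasDerivAt.hasDerivWithinAt
      have h0mem : (0:ℝ) ∈ deriv f '' Ioo s₀ u :=
        exists_hasDerivWithinAt_eq_of_lt_of_gt hsu hd hd₀ hneg
      obtain ⟨w, hw, hw0⟩ := h0mem
      have hwmem : w ∈ Icc s₀ (T + ε) := ⟨hw.1.le, le_trans hw.2.le hu.2⟩
      exact hne0 w (hzone2 w hwmem) hw0
    · exact absurd h0 hne
    · rwa [abs_of_pos hpos] at habs'
  -- growth estimate on [s₀, T+ε]
  have hgrow := Convex.mul_sub_le_image_sub_of_le_deriv (convex_Icc s₀ (T + ε))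
    hf.continuous.continuousOn hf.differentiableOn
    (fun x hx => hderivpos x (interior_subset hx))
  -- hence T + ε ∈ S
  have hTεS : T + ε ∈ S := by
    refine ⟨⟨hTε, by simp only [hεdef]; linarith [min_le_right (ε₀/2) (t₁ - T)]⟩, ?_⟩
    intro u hu
    have := hgrow s₀ ⟨le_refl _, hTε⟩ u hu hu.1
    simp only [hψdef]
    linarith
  have := le_csSup hSbdd hTεS
  linarith
/-- Version with nonzero derivative: reduce negative case to positive via reflection. -/
lemma aux_ne_deriv (f g : ℝ → ℝ) (hf : Differentiable ℝ f)
    (hfg : ∀ s : ℝ, (deriv f s) ^ 2 = g (f s))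
    (M δ c : ℝ) (hc : 0 < c)
    (hle : ∀ s, f s ≤ M)
    (hzone : ∀ y, M - δ < y → y ≤ M → c ≤ g y)
    (s₀ : ℝ) (hs₀ : M - δ < f s₀) (hd₀ : deriv f s₀ ≠ 0) : False := by
  rcases hd₀.lt_or_gt with hneg | hpos
  · -- use f₂ = f ∘ neg
    set f₂ : ℝ → ℝ := fun t => f (-t) with hf₂def
    have hf₂ : Differentiable ℝ f₂ := hf.comp differentiable_neg
    have hderiv₂ : ∀ t, deriv f₂ t = -deriv f (-t) := by
      intro t
      have h1 : deriv f₂ t = deriv f (-t) * deriv (fun t : ℝ => -t) t :=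
        deriv_comp t (hf (-t)) (differentiable_neg t)
      rw [h1, deriv_neg]
      ring
    have hfg₂ : ∀ s : ℝ, (deriv f₂ s) ^ 2 = g (f₂ s) := by
      intro s
      rw [hderiv₂, neg_sq]
      exact hfg (-s)
    exact aux_pos_deriv f₂ g hf₂ hfg₂ M δ c hc (fun s => hle (-s)) hzone (-s₀)
      (by simpa [hf₂def] using hs₀)
      (by rw [hderiv₂, neg_neg]; linarith)
  · exact aux_pos_deriv f g hf hfg M δ c hc hle hzone s₀ hs₀ hpos

/-- `g` vanishes at the supremum of the range of `f`. -/
lemma vanishes_at_sup (f g : ℝ → ℝ)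
    (hf : Differentiable ℝ f) (hg : Continuous g)
    (hfg : ∀ s : ℝ, (deriv f s) ^ 2 = g (f s))
    (hne : (Set.range f).Nonempty)
    (hbdd_above : BddAbove (Set.range f)) :
    g (sSup (Set.range f)) = 0 := by
  set M : ℝ := sSup (Set.range f) with hMdef
  have hlub : IsLUB (Set.range f) M := isLUB_csSup hne hbdd_above
  have hle : ∀ s, f s ≤ M := fun s => hlub.1 ⟨s, rfl⟩
  -- g M ≥ 0
  have hgM0 : 0 ≤ g M := by
    have hsub : Set.range f ⊆ {y | 0 ≤ g y} := by
      rintro y ⟨s, rfl⟩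
      rw [Set.mem_setOf_eq, ← hfg s]
      exact sq_nonneg _
    have hclosed : IsClosed {y | 0 ≤ g y} := isClosed_le continuous_const hg
    have := closure_minimal hsub hclosed (hlub.mem_closure hne)
    exact this
  by_contra h
  have hgM : 0 < g M := lt_of_le_of_ne hgM0 (Ne.symm h)
  set c : ℝ := g M / 2 with hcdef
  have hc : 0 < c := by simp only [hcdef]; linarith
  obtain ⟨δ, hδ, hball⟩ := Metric.continuousAt_iff.1 hg.continuousAt c hc
  have hzone : ∀ y, M - δ < y → y ≤ M → c ≤ g y := by
    intro y h1 h2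
    have hdist : dist y M < δ := by
      rw [Real.dist_eq, abs_lt]; constructor <;> linarith
    have := hball hdist
    rw [Real.dist_eq, abs_lt] at this
    simp only [hcdef]
    linarith [this.1]
  obtain ⟨y, ⟨s₀, rfl⟩, hy⟩ := exists_lt_of_lt_csSup hne (sub_lt_self M hδ)
  have hd₀ : deriv f s₀ ≠ 0 := by
    intro h0
    have := hfg s₀
    rw [h0] at this
    have hzc := hzone (f s₀) hy (hle s₀)
    simp at this
    rw [← this] at hzc
    linarith
  exact aux_ne_deriv f g hf hfg M δ c hc hle hzone s₀ hy hd₀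

/-- Let `f : ℝ → ℝ` be differentiable and `g : ℝ → ℝ` continuous. Suppose
`(f′(s))² = g(f(s))` for every `s ∈ ℝ`, and the range of `f` is bounded (above and below)
and nonempty. Then `g` vanishes at the infimum and at the supremum of the range of `f`. -/
theorem vanishes_at_endpoints_of_range (f g : ℝ → ℝ)
    (hf : Differentiable ℝ f) (hg : Continuous g)
    (hfg : ∀ s : ℝ, (deriv f s) ^ 2 = g (f s))
    (hne : (Set.range f).Nonempty)
    (hbdd_above : BddAbove (Set.range f)) (hbdd_below : BddBelow (Set.range f)) :
    g (sInf (Set.range f)) = 0 ∧ g (sSup (Set.range f)) = 0 := by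
  refine ⟨?_, vanishes_at_sup f g hf hg hfg hne hbdd_above⟩
  -- apply the sup lemma to -f and g ∘ neg
  set f₃ : ℝ → ℝ := fun s => -f s with hf₃def
  set g₃ : ℝ → ℝ := fun y => g (-y) with hg₃def
  have hf₃ : Differentiable ℝ f₃ := hf.neg
  have hg₃ : Continuous g₃ := hg.comp continuous_neg
  have hfg₃ : ∀ s : ℝ, (deriv f₃ s) ^ 2 = g₃ (f₃ s) := by
    intro s
    have h3 : deriv f₃ s = -deriv f s := deriv.neg
    rw [h3, neg_sq]
    show deriv f s ^ 2 = g (- - f s)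
    rw [neg_neg]
    exact hfg s
  have hne₃ : (Set.range f₃).Nonempty := ⟨-f 0, 0, rfl⟩
  have hbdd₃ : BddAbove (Set.range f₃) := by
    obtain ⟨a, ha⟩ := hbdd_below
    exact ⟨-a, by rintro y ⟨s, rfl⟩; exact neg_le_neg (ha ⟨s, rfl⟩)⟩
  have hglb : IsGLB (Set.range f) (sInf (Set.range f)) := isGLB_csInf hne hbdd_below
  have hlub₃ : IsLUB (Set.range f₃) (-(sInf (Set.range f))) := by
    constructor
    · rintro y ⟨s, rfl⟩
      exact neg_le_neg (hglb.1 ⟨s, rfl⟩)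
    · intro b hb
      rw [← neg_neg b]
      apply neg_le_neg
      apply hglb.2
      rintro y ⟨s, rfl⟩
      rw [← neg_neg (f s)]
      exact neg_le_neg (hb ⟨s, rfl⟩)
  have hsup₃ : sSup (Set.range f₃) = -(sInf (Set.range f)) := hlub₃.csSup_eq hne₃
  have := vanishes_at_sup f₃ g₃ hf₃ hg₃ hfg₃ hne₃ hbdd₃
  rw [hsup₃] at this
  show g (sInf (Set.range f)) = 0
  rw [← neg_neg (sInf (Set.range f))]
  exact this
end

section
/- Fix an integer d ≥ 4 and reals μ > 0, C > 0, E. Let a, b be reals with μ^(1/(d−3)) < a ≤ b, and let r : ℝ → ℝ be a differentiable function with a ≤ r(s) ≤ b for all s ∈ ℝ, satisfying the radial null-geodesic equation r(s)⁴ · (r′(s))² = E² r(s)⁴ − C r(s)² (1 − μ r(s)^(3−d)) for all s ∈ ℝ. Then r is constant, and its constant value c satisfies E² c⁴ − C c² (1 − μ c^(3−d)) = 0. -/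
open Set Filter Topology

/-- If `|r'| ≥ δ > 0` whenever `r ≤ x0`, `r ≥ aa` everywhere, `r s0 ≤ x0` and
`r' s0 < 0`, we get a contradiction: `r` keeps decreasing forever at speed `δ`. -/
private lemma escape_lemma (aa x0 s0 δ : ℝ) (hδ : 0 < δ) (r : ℝ → ℝ)
    (hr : Differentiable ℝ r) (hfloor : ∀ s, aa ≤ r s)
    (hH : ∀ s, r s ≤ x0 → δ ≤ |deriv r s|)
    (hx0 : r s0 ≤ x0) (hneg : deriv r s0 < 0) : False := by
  have habs : ∀ s, r s ≤ x0 → deriv r s < 0 → deriv r s ≤ -δ := by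
    intro s hs hneg'
    have h1 := hH s hs
    rw [abs_of_neg hneg'] at h1
    linarith
  -- decay estimate
  have decay : ∀ T' : ℝ, s0 ≤ T' → (∀ t ∈ Set.Ioo s0 T', deriv r t ≤ -δ) →
      ∀ t ∈ Set.Icc s0 T', r t ≤ x0 - δ * (t - s0) := by
    intro T' hT' hder t ht
    have anti : AntitoneOn (fun u => r u + δ * u) (Set.Icc s0 T') := by
      apply antitoneOn_of_deriv_nonpos (convex_Icc _ _)
      · exact (hr.add ((differentiable_const δ).mul differentiable_id)).continuous.continuousOn
      · exact (hr.add ((differentiable_const δ).mul differentiable_id)).differentiableOn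
      · intro x hx
        rw [interior_Icc] at hx
        have hdx : deriv (fun u => r u + δ * u) x = deriv r x + δ := by
          have h2 : HasDerivAt (fun u => r u + δ * u) (deriv r x + δ * 1) x :=
            (hr x).hasDerivAt.add ((hasDerivAt_id x).const_mul δ)
          simpa using h2.deriv
        rw [hdx]
        have := hder x hx
        linarith
    have h3 := anti (Set.left_mem_Icc.mpr hT') ht ht.1
    simp only at h3
    nlinarith
  set S : Set ℝ := {s : ℝ | s0 ≤ s ∧ ∀ t ∈ Set.Icc s0 s, deriv r t ≤ -δ} with hS
  have hs0S : s0 ∈ S := by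
    refine ⟨le_rfl, ?_⟩
    intro t ht
    have : t = s0 := le_antisymm ht.2 ht.1
    subst this
    exact habs t hx0 hneg
  have hbddS : BddAbove S := by
    refine ⟨s0 + (x0 - aa) / δ, ?_⟩
    intro s hs
    have h1 := decay s hs.1 (fun t ht => hs.2 t ⟨ht.1.le, ht.2.le⟩) s ⟨hs.1, le_rfl⟩
    have h2 := hfloor s
    have h3 : δ * (s - s0) ≤ x0 - aa := by linarith
    have h4 : s - s0 ≤ (x0 - aa) / δ := by
      rw [le_div_iff₀ hδ]; nlinarith
    linarith
  set T := sSup S with hT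
  have hTlb : s0 ≤ T := le_csSup hbddS hs0S
  have hpre : ∀ t, s0 ≤ t → t < T → deriv r t ≤ -δ := by
    intro t ht htT
    obtain ⟨s, hsS, hts⟩ := exists_lt_of_lt_csSup ⟨s0, hs0S⟩ htT
    exact hsS.2 t ⟨ht, hts.le⟩
  have hrIcc : ∀ t ∈ Set.Icc s0 T, r t ≤ x0 - δ * (t - s0) :=
    decay T hTlb (fun t ht => hpre t ht.1.le ht.2)
  have hrT : r T ≤ x0 := by
    have := hrIcc T ⟨hTlb, le_rfl⟩
    nlinarith
  -- Darboux helper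
  have darboux : ∀ t1 t2 : ℝ, s0 ≤ t1 → t1 ≤ t2 → deriv r t1 ≤ -δ → δ ≤ deriv r t2 →
      (∀ t ∈ Set.Icc t1 t2, r t ≤ x0) → False := by
    intro t1 t2 h01 h12 hd1 hd2 hrle
    have himg : Set.OrdConnected (deriv r '' Set.Icc t1 t2) :=
      (Set.ordConnected_Icc).image_deriv (fun x _ => (hr x))
    have h0mem : (0 : ℝ) ∈ deriv r '' Set.Icc t1 t2 := by
      have := himg.out (Set.mem_image_of_mem _ (Set.left_mem_Icc.mpr h12))
        (Set.mem_image_of_mem _ (Set.right_mem_Icc.mpr h12))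
      exact this ⟨by linarith, by linarith⟩
    obtain ⟨u, huI, hu0⟩ := h0mem
    have := hH u (hrle u huI)
    rw [hu0] at this
    simp at this
    linarith
  have hdT : deriv r T ≤ -δ := by
    have h1 := hH T hrT
    rcases abs_cases (deriv r T) with ⟨he, _⟩ | ⟨he, _⟩
    · exfalso
      rcases eq_or_lt_of_le hTlb with heq | hlt
      · rw [← heq] at h1 he; linarith
      · have hmid : s0 < (s0 + T) / 2 := by linarith
        have hmid2 : (s0 + T) / 2 < T := by linarith
        refine darboux ((s0 + T) / 2) T hmid.le hmid2.le
          (hpre _ hmid.le hmid2) (by linarith) ?_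
        intro t ht
        have := hrIcc t ⟨by linarith [ht.1], ht.2⟩
        nlinarith [ht.1]
    · linarith
  -- extend beyond T
  have hslope : Filter.Tendsto (slope r T) (𝓝[≠] T) (𝓝 (deriv r T)) :=
    hasDerivAt_iff_tendsto_slope.mp (hr T).hasDerivAt
  have hev : ∀ᶠ t in 𝓝[>] T, slope r T t < 0 := by
    have h2 : ∀ᶠ t in 𝓝[≠] T, slope r T t < 0 :=
      hslope.eventually (gt_mem_nhds (show deriv r T < 0 by linarith))
    exact h2.filter_mono (nhdsWithin_mono _ (fun x hx => ne_of_gt hx))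
  obtain ⟨u, huT, hu⟩ := mem_nhdsGT_iff_exists_Ioc_subset.mp hev
  have hrlt : ∀ t ∈ Set.Ioc T u, r t < r T := by
    intro t ht
    have h2 : slope r T t < 0 := hu ht
    rw [slope_def_field] at h2
    have h3 : (0:ℝ) < t - T := by linarith [ht.1]
    rcases div_neg_iff.mp h2 with ⟨_, h5⟩ | ⟨h4, _⟩
    · linarith
    · linarith
  have hdneg : ∀ t ∈ Set.Ioc T u, deriv r t ≤ -δ := by
    intro t ht
    have hrtx0 : r t ≤ x0 := le_of_lt (lt_of_lt_of_le (hrlt t ht) hrT)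
    have h1 := hH t hrtx0
    rcases abs_cases (deriv r t) with ⟨he, _⟩ | ⟨he, _⟩
    · exfalso
      refine darboux T t hTlb ht.1.le hdT (by linarith) ?_
      intro v hv
      rcases eq_or_lt_of_le hv.1 with heq | hlt
      · rw [← heq]; exact hrT
      · exact le_of_lt (lt_of_lt_of_le (hrlt v ⟨hlt, le_trans hv.2 ht.2⟩) hrT)
    · linarith
  have huS : u ∈ S := by
    refine ⟨le_trans hTlb huT.le, ?_⟩
    intro t ht
    rcases lt_or_ge t T with hlt | hge
    · exact hpre t ht.1 hlt
    · rcases eq_or_lt_of_le hge with heq | hlt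
      · rw [← heq]; exact hdT
      · exact hdneg t ⟨hlt, ht.2⟩
  exact absurd huT (not_lt.mpr (le_csSup hbddS huS))

/-- Version of the escape lemma that only needs `r' s0 ≠ 0`, using time reflection. -/
private lemma escape_lemma' (aa x0 s0 δ : ℝ) (hδ : 0 < δ) (r : ℝ → ℝ)
    (hr : Differentiable ℝ r) (hfloor : ∀ s, aa ≤ r s)
    (hH : ∀ s, r s ≤ x0 → δ ≤ |deriv r s|)
    (hx0 : r s0 ≤ x0) (hne : deriv r s0 ≠ 0) : False := by
  rcases hne.lt_or_gt with hneg | hpos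
  · exact escape_lemma aa x0 s0 δ hδ r hr hfloor hH hx0 hneg
  · have hgd : ∀ t : ℝ, deriv (fun u : ℝ => r (-u)) t = -deriv r (-t) := by
      intro t
      have h2 : HasDerivAt (fun u : ℝ => r (-u)) (deriv r (-t) * (-1)) t :=
        (hr (-t)).hasDerivAt.comp t (hasDerivAt_neg t)
      simpa using h2.deriv
    have hg : Differentiable ℝ (fun u : ℝ => r (-u)) := by
      intro t
      exact ((hr (-t)).hasDerivAt.comp t (hasDerivAt_neg t)).differentiableAt
    refine escape_lemma aa x0 (-s0) δ hδ (fun u => r (-u)) hg (fun s => hfloor (-s)) ?_ ?_ ?_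
    · intro s hs
      rw [hgd, abs_neg]
      exact hH (-s) hs
    · simpa using hx0
    · rw [hgd, neg_neg]
      linarith

/-- Convexity-derived three-point inequality for the effective potential
`h(x) = E² x² − C (1 − μ x^(3−d))`. -/
private lemma h_three_point (d : ℕ) (μ C E : ℝ) (hμ : 0 < μ) (hC : 0 < C) :
    ∀ y w z : ℝ, 0 < y → y < w → w < z →
      E ^ 2 * w ^ 2 - C * (1 - μ * w ^ ((3 : ℝ) - d)) ≤
        ((z - w) / (z - y)) * (E ^ 2 * y ^ 2 - C * (1 - μ * y ^ ((3 : ℝ) - d))) +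
        ((w - y) / (z - y)) * (E ^ 2 * z ^ 2 - C * (1 - μ * z ^ ((3 : ℝ) - d))) := by
  set g : ℝ → ℝ := fun x => E ^ 2 * x ^ 2 + (C * μ) * x ^ ((3 : ℤ) - d) + (-C) with hg
  have c1 : ConvexOn ℝ (Set.Ioi (0:ℝ)) (fun x : ℝ => E ^ 2 * x ^ 2) := by
    simpa [smul_eq_mul] using
      (((convexOn_pow 2).subset Set.Ioi_subset_Ici_self (convex_Ioi (0:ℝ))).smul (sq_nonneg E))
  have c2 : ConvexOn ℝ (Set.Ioi (0:ℝ)) (fun x : ℝ => (C * μ) * x ^ ((3 : ℤ) - d)) := by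
    simpa [smul_eq_mul] using ((convexOn_zpow ((3 : ℤ) - d)).smul (mul_pos hC hμ).le)
  have gconv : ConvexOn ℝ (Set.Ioi (0:ℝ)) g := by
    exact (c1.add c2).add_const (-C)
  have heq : ∀ x : ℝ, 0 < x →
      E ^ 2 * x ^ 2 - C * (1 - μ * x ^ ((3 : ℝ) - d)) = g x := by
    intro x hx
    have hcast : ((3 : ℝ) - d) = (((3 - (d : ℤ)) : ℤ) : ℝ) := by push_cast; ring
    rw [hcast, Real.rpow_intCast]
    simp only [hg]
    ring
  intro y w z hy hyw hwz
  have hyz : y < z := hyw.trans hwz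
  have hzy : (0:ℝ) < z - y := by linarith
  have l1 : (0:ℝ) ≤ (z - w) / (z - y) := div_nonneg (by linarith) hzy.le
  have l2 : (0:ℝ) ≤ (w - y) / (z - y) := div_nonneg (by linarith) hzy.le
  have lsum : (z - w) / (z - y) + (w - y) / (z - y) = 1 := by field_simp; ring
  have harg : ((z - w) / (z - y)) • y + ((w - y) / (z - y)) • z = w := by
    simp only [smul_eq_mul]
    field_simp
    ring
  have hkey := gconv.2 (Set.mem_Ioi.mpr hy) (Set.mem_Ioi.mpr (hy.trans hyz)) l1 l2 lsum
  rw [harg] at hkey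
  rw [heq y hy, heq w (hy.trans hyw), heq z (hy.trans hyz)]
  simpa [smul_eq_mul] using hkey

private lemma chain_ineq (A B P : ℝ) (hA : 0 < A) (h7 : A ≤ P * B)
    (hP1 : P ≤ 1) (hP0 : 0 < P) : A ≤ B := by
  have hPB : 0 < P * B := lt_of_lt_of_le hA h7
  have hB : 0 < B := by
    rcases mul_pos_iff.mp hPB with ⟨_, hB⟩ | ⟨hP, _⟩
    · exact hB
    · linarith
  have h12 : P * B ≤ 1 * B := mul_le_mul_of_nonneg_right hP1 hB.le
  linarith

/-- Fix an integer `d ≥ 4` and reals `μ > 0`, `C > 0`, `E`. Let `a, b` be reals with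
`μ^(1/(d−3)) < a ≤ b`, and let `r : ℝ → ℝ` be a differentiable function with
`a ≤ r(s) ≤ b` for all `s`, satisfying the radial null-geodesic equation
`r(s)⁴ (r′(s))² = E² r(s)⁴ − C r(s)² (1 − μ r(s)^(3−d))` for all `s`. Then `r` is constant,
and its constant value `c` satisfies `E² c⁴ − C c² (1 − μ c^(3−d)) = 0`. -/
theorem trapped_photon_constant_radius (d : ℕ) (hd : 4 ≤ d) (μ C E : ℝ)
    (hμ : 0 < μ) (hC : 0 < C)
    (a b : ℝ) (ha : μ ^ ((1 : ℝ) / ((d : ℝ) - 3)) < a) (hab : a ≤ b)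
    (r : ℝ → ℝ) (hr : Differentiable ℝ r)
    (hbound : ∀ s : ℝ, a ≤ r s ∧ r s ≤ b)
    (hgeo : ∀ s : ℝ, (r s) ^ 4 * (deriv r s) ^ 2 =
      E ^ 2 * (r s) ^ 4 - C * (r s) ^ 2 * (1 - μ * (r s) ^ ((3 : ℝ) - d))) :
    ∃ c : ℝ, (∀ s : ℝ, r s = c) ∧
      E ^ 2 * c ^ 4 - C * c ^ 2 * (1 - μ * c ^ ((3 : ℝ) - d)) = 0 := by
  have ha0 : 0 < a := lt_of_le_of_lt (Real.rpow_nonneg hμ.le _) ha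
  have hb0 : 0 < b := ha0.trans_le hab
  set h : ℝ → ℝ := fun x => E ^ 2 * x ^ 2 - C * (1 - μ * x ^ ((3 : ℝ) - d)) with hh
  have hrpos : ∀ s, 0 < r s := fun s => ha0.trans_le (hbound s).1
  have key : ∀ s, (r s) ^ 2 * (deriv r s) ^ 2 = h (r s) := by
    intro s
    have h1 := hgeo s
    have h3 : (r s) ^ 2 * ((r s) ^ 2 * (deriv r s) ^ 2 - h (r s)) = 0 := by
      simp only [hh]
      linear_combination h1
    rcases mul_eq_zero.mp h3 with h4 | h4
    · exact absurd h4 (pow_ne_zero 2 (hrpos s).ne')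
    · linarith
  by_cases hconst : ∀ s, deriv r s = 0
  · refine ⟨r 0, fun s => is_const_of_deriv_eq_zero hr hconst s 0, ?_⟩
    have h0 := hgeo 0
    rw [hconst 0] at h0
    linear_combination -h0
  · exfalso
    push_neg at hconst
    obtain ⟨s0, hs0⟩ := hconst
    set x0 := r s0 with hx0def
    have hax0 : a ≤ x0 := (hbound s0).1
    have hx0b : x0 ≤ b := (hbound s0).2
    have hD2 : 0 < (deriv r s0) ^ 2 := by
      have h1 := abs_pos.mpr hs0
      nlinarith [sq_abs (deriv r s0)]
    have hx0pos : 0 < h x0 := by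
      rw [← key s0]
      exact mul_pos (pow_pos (hrpos s0) 2) hD2
    -- uniform speed bound from a uniform lower bound on h
    have speed : ∀ m : ℝ, 0 < m → ∀ s, m ≤ h (r s) →
        Real.sqrt m / b ≤ |deriv r s| := by
      intro m hm s hms
      have h2 := key s
      have h3 : (r s) ^ 2 ≤ b ^ 2 := by nlinarith [(hrpos s).le, (hbound s).2]
      have h4 : m ≤ b ^ 2 * (deriv r s) ^ 2 := by nlinarith [sq_nonneg (deriv r s)]
      have h5 : (Real.sqrt m / b) ^ 2 ≤ (deriv r s) ^ 2 := by
        rw [div_pow, Real.sq_sqrt hm.le, div_le_iff₀ (by positivity)]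
        nlinarith [sq_nonneg (deriv r s)]
      have h6 := Real.sqrt_le_sqrt h5
      rwa [Real.sqrt_sq (by positivity), Real.sqrt_sq_eq_abs] at h6
    by_cases hcase : ∀ x ∈ Set.Icc a x0, 0 < h x
    · -- h positive on [a, x0]: escape downward below a
      have hcont : ContinuousOn h (Set.Icc a x0) := by
        intro x hx
        have hxpos : 0 < x := lt_of_lt_of_le ha0 hx.1
        have c0 : ContinuousAt (fun x : ℝ => x ^ ((3 : ℝ) - (d:ℕ))) x :=
          Real.continuousAt_rpow_const x _ (Or.inl hxpos.ne')
        exact ((continuousAt_const.mul ((continuousAt_id.pow 2))).sub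
          (continuousAt_const.mul (continuousAt_const.sub
            (continuousAt_const.mul c0)))).continuousWithinAt
      obtain ⟨xm, hxm, hxmin⟩ := isCompact_Icc.exists_isMinOn
        (Set.nonempty_Icc.mpr hax0) hcont
      set m := h xm with hm
      have hmpos : 0 < m := hcase xm hxm
      set δ := Real.sqrt m / b with hδdef
      have hδ : 0 < δ := div_pos (Real.sqrt_pos.mpr hmpos) hb0
      have hH : ∀ s, r s ≤ x0 → δ ≤ |deriv r s| := by
        intro s hs
        exact speed m hmpos s (hxmin ⟨(hbound s).1, hs⟩)
      exact escape_lemma' a x0 s0 δ hδ r hr (fun s => (hbound s).1) hH le_rfl hs0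
    · -- some y ∈ [a, x0] has h y ≤ 0: then h ≥ h x0 on [x0, b]; escape upward above b
      push_neg at hcase
      obtain ⟨y, hy, hy0⟩ := hcase
      have hyx0 : y < x0 :=
        lt_of_le_of_ne hy.2 (fun hcontra => by rw [hcontra] at hy0; linarith)
      have hup : ∀ z, x0 ≤ z → h x0 ≤ h z := by
        intro z hz
        rcases eq_or_lt_of_le hz with heq | hlt
        · exact le_of_eq (by rw [heq])
        · have h3pt := h_three_point d μ C E hμ hC y x0 z
            (lt_of_lt_of_le ha0 hy.1) hyx0 hlt
          have hzy : (0:ℝ) < z - y := by linarith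
          have hlamle : (x0 - y) / (z - y) ≤ 1 := (div_le_one hzy).mpr (by linarith)
          have hlampos : 0 < (x0 - y) / (z - y) := div_pos (by linarith) hzy
          have h6 : ((z - x0) / (z - y)) * h y ≤ 0 :=
            mul_nonpos_iff.mpr (Or.inl ⟨div_nonneg (by linarith) hzy.le, hy0⟩)
          have h7 : h x0 ≤ ((x0 - y) / (z - y)) * h z := by
            have := h3pt
            simp only [hh] at *
            linarith
          exact chain_ineq (h x0) (h z) ((x0 - y) / (z - y)) hx0pos h7 hlamle hlampos
      set δ := Real.sqrt (h x0) / b with hδdef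
      have hδ : 0 < δ := div_pos (Real.sqrt_pos.mpr hx0pos) hb0
      have hgd : ∀ t : ℝ, deriv (fun u : ℝ => -r u) t = -deriv r t := by
        intro t
        exact ((hr t).hasDerivAt.neg).deriv
      have hH : ∀ s, -r s ≤ -x0 → δ ≤ |deriv (fun u : ℝ => -r u) s| := by
        intro s hs
        rw [hgd, abs_neg]
        exact speed (h x0) hx0pos s (hup (r s) (by linarith))
      refine escape_lemma' (-b) (-x0) s0 δ hδ (fun u => -r u) hr.neg
        (fun s => neg_le_neg (hbound s).2) hH le_rfl ?_
      rw [hgd]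
      simpa using hs0
end

section
/- Fix an integer d ≥ 4 and reals μ > 0, C > 0, E. Let a, b be reals with μ^(1/(d−3)) < a ≤ b, and let r : ℝ → ℝ be a twice differentiable function with a ≤ r(s) ≤ b for all s ∈ ℝ, satisfying for all s ∈ ℝ both the first-integral equation r(s)⁴ (r′(s))² = R(r(s)) and the second-order equation 2 r(s)⁴ r″(s) + 4 r(s)³ (r′(s))² = R′(r(s)), where R(r) := E² r⁴ − C (r² − μ r^(5−d)) and R′(r) := 4 E² r³ − C (2r − μ(5−d) r^(4−d)). Then r(s) = r_P := (μ(d−1)/2)^(1/(d−3)) for all s ∈ ℝ. -/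
open Set

/-- If `f` is differentiable with monotone derivative (given via `f'`) and `f` is bounded
above, then the derivative vanishes identically. -/
private lemma deriv_eq_zero_of_monotone_deriv_of_bddAbove (f f' : ℝ → ℝ)
    (hf : ∀ x, HasDerivAt f (f' x) x) (hmono : Monotone f')
    (K : ℝ) (hK : ∀ x, f x ≤ K) : ∀ x, f' x = 0 := by
  intro x₀
  have hdf : ∀ x, deriv f x = f' x := fun x => (hf x).deriv
  have hdiff : Differentiable ℝ f := fun x => (hf x).differentiableAt
  rcases lt_trichotomy (f' x₀) 0 with h | h | h
  · exfalso
    set c := f' x₀ with hc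
    have hder : ∀ x ∈ interior (Iic x₀), deriv f x ≤ c := by
      intro x hx
      rw [hdf]
      exact hmono (le_of_lt (by simpa using hx))
    have hgrow : ∀ t ∈ Iic x₀, f x₀ - f t ≤ c * (x₀ - t) :=
      fun t ht => (convex_Iic x₀).image_sub_le_mul_sub_of_deriv_le
        hdiff.continuous.continuousOn (hdiff.differentiableOn) hder t ht x₀ (mem_Iic.2 le_rfl) ht
    set t := x₀ - (K - f x₀ + 1) / (-c) with htdef
    have hKf : (0:ℝ) < K - f x₀ + 1 := by have := hK x₀; linarith
    have hcpos : (0:ℝ) < -c := by linarith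
    have ht : t ≤ x₀ := by
      have h0 : 0 ≤ (K - f x₀ + 1) / (-c) := le_of_lt (div_pos hKf hcpos)
      rw [htdef]; linarith
    have h1 := hgrow t ht
    have h2 : c * (x₀ - t) = -(K - f x₀ + 1) := by
      rw [htdef]
      have hcne : c ≠ 0 := ne_of_lt h
      field_simp
      ring
    have h3 := hK t
    rw [h2] at h1
    linarith
  · exact h
  · exfalso
    set c := f' x₀ with hc
    have hder : ∀ x ∈ interior (Ici x₀), c ≤ deriv f x := by
      intro x hx
      rw [hdf]
      exact hmono (le_of_lt (by simpa using hx))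
    have hgrow : ∀ t ∈ Ici x₀, c * (t - x₀) ≤ f t - f x₀ :=
      fun t ht => (convex_Ici x₀).mul_sub_le_image_sub_of_le_deriv
        hdiff.continuous.continuousOn (hdiff.differentiableOn) hder x₀ (mem_Ici.2 le_rfl) t ht ht
    set t := x₀ + (K - f x₀ + 1) / c with htdef
    have hKf : (0:ℝ) < K - f x₀ + 1 := by have := hK x₀; linarith
    have ht : x₀ ≤ t := by
      have h0 : 0 ≤ (K - f x₀ + 1) / c := le_of_lt (div_pos hKf h)
      rw [htdef]; linarith
    have h1 := hgrow t ht
    have h2 : c * (t - x₀) = K - f x₀ + 1 := by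
      rw [htdef]
      field_simp
      ring
    have h3 := hK t
    rw [h2] at h1
    linarith

/-- Fix an integer `d ≥ 4` and reals `μ > 0`, `C > 0`, `E`. Let `a, b` be reals with
`μ^(1/(d−3)) < a ≤ b`, and let `r : ℝ → ℝ` be twice differentiable with `a ≤ r(s) ≤ b`
for all `s`, satisfying the first-integral equation `r(s)⁴ (r′(s))² = R(r(s))` and the
second-order equation `2 r(s)⁴ r″(s) + 4 r(s)³ (r′(s))² = R′(r(s))` for all `s`, where
`R(r) = E² r⁴ − C (r² − μ r^(5−d))` and `R′(r) = 4 E² r³ − C (2r − μ(5−d) r^(4−d))`.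
Then `r(s) = r_P = (μ(d−1)/2)^(1/(d−3))` for all `s`. -/
theorem trapped_photon_on_photon_sphere (d : ℕ) (hd : 4 ≤ d) (μ C E : ℝ)
    (hμ : 0 < μ) (hC : 0 < C)
    (a b : ℝ) (ha : μ ^ ((1 : ℝ) / ((d : ℝ) - 3)) < a) (hab : a ≤ b)
    (r : ℝ → ℝ) (hr : Differentiable ℝ r) (hr' : Differentiable ℝ (deriv r))
    (hbound : ∀ s : ℝ, a ≤ r s ∧ r s ≤ b)
    (hgeo1 : ∀ s : ℝ, (r s) ^ 4 * (deriv r s) ^ 2 =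
      E ^ 2 * (r s) ^ 4 - C * ((r s) ^ 2 - μ * (r s) ^ ((5 : ℝ) - d)))
    (hgeo2 : ∀ s : ℝ, 2 * (r s) ^ 4 * deriv (deriv r) s + 4 * (r s) ^ 3 * (deriv r s) ^ 2 =
      4 * E ^ 2 * (r s) ^ 3 - C * (2 * r s - μ * ((5 : ℝ) - d) * (r s) ^ ((4 : ℝ) - d))) :
    ∀ s : ℝ, r s = (μ * ((d : ℝ) - 1) / 2) ^ ((1 : ℝ) / ((d : ℝ) - 3)) := by
  have hd4 : (4:ℝ) ≤ (d:ℝ) := by exact_mod_cast hd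
  have hd3 : (0:ℝ) < (d:ℝ) - 3 := by linarith
  have hd3ne : ((d:ℝ) - 3) ≠ 0 := ne_of_gt hd3
  have hMpos : (0:ℝ) < μ * ((d:ℝ) - 1) / 2 := by
    have h1 : (0:ℝ) < (d:ℝ) - 1 := by linarith
    positivity
  set p : ℝ := (μ * ((d : ℝ) - 1) / 2) ^ ((1 : ℝ) / ((d : ℝ) - 3)) with hpdef
  have hppos : 0 < p := Real.rpow_pos_of_pos hMpos _
  have hpe : p ^ ((d:ℝ) - 3) = μ * ((d:ℝ) - 1) / 2 := by
    rw [hpdef, ← Real.rpow_mul hMpos.le, one_div, inv_mul_cancel₀ hd3ne, Real.rpow_one]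
  have hrpos : ∀ s, 0 < r s := fun s =>
    lt_of_lt_of_le (lt_trans (Real.rpow_pos_of_pos hμ _) ha) (hbound s).1
  -- key sign fact
  have key : ∀ s, 0 ≤ (r s - p) * (2 * r s - μ * ((d:ℝ) - 1) * (r s) ^ ((4:ℝ) - d)) := by
    intro s
    set x := r s with hx
    have hxpos : 0 < x := hrpos s
    have hy : (0:ℝ) < x ^ ((4:ℝ) - d) := Real.rpow_pos_of_pos hxpos _
    have h1 : x ^ ((4:ℝ) - d) * x ^ ((d:ℝ) - 3) = x := by
      rw [← Real.rpow_add hxpos, show ((4:ℝ) - d) + ((d:ℝ) - 3) = 1 by ring, Real.rpow_one]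
    have hfac : 2 * x - μ * ((d:ℝ) - 1) * x ^ ((4:ℝ) - d)
        = x ^ ((4:ℝ) - d) * (2 * x ^ ((d:ℝ) - 3) - 2 * (μ * ((d:ℝ) - 1) / 2)) := by
      linear_combination (-2 : ℝ) * h1
    rcases le_total x p with hxp | hxp
    · have hle : x ^ ((d:ℝ) - 3) ≤ p ^ ((d:ℝ) - 3) :=
        Real.rpow_le_rpow hxpos.le hxp hd3.le
      rw [hpe] at hle
      have h2 : 2 * x - μ * ((d:ℝ) - 1) * x ^ ((4:ℝ) - d) ≤ 0 := by
        rw [hfac]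
        exact mul_nonpos_of_nonneg_of_nonpos hy.le (by linarith)
      have h3 := mul_nonneg (neg_nonneg.2 (show x - p ≤ 0 by linarith)) (neg_nonneg.2 h2)
      rwa [neg_mul_neg] at h3
    · have hle : p ^ ((d:ℝ) - 3) ≤ x ^ ((d:ℝ) - 3) :=
        Real.rpow_le_rpow hppos.le hxp hd3.le
      rw [hpe] at hle
      have h2 : 0 ≤ 2 * x - μ * ((d:ℝ) - 1) * x ^ ((4:ℝ) - d) := by
        rw [hfac]
        exact mul_nonneg hy.le (by linarith)
      exact mul_nonneg (by linarith) h2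
  -- the simplified second order equation
  have hsecond : ∀ s, 2 * (r s) ^ 4 * deriv (deriv r) s
      = C * (2 * r s - μ * ((d:ℝ) - 1) * (r s) ^ ((4:ℝ) - d)) := by
    intro s
    have hxpos : 0 < r s := hrpos s
    have hxne : r s ≠ 0 := ne_of_gt hxpos
    have h5 : (r s) ^ ((5:ℝ) - d) = (r s) ^ ((4:ℝ) - d) * r s := by
      rw [show ((5:ℝ) - (d:ℝ)) = ((4:ℝ) - d) + 1 by ring, Real.rpow_add hxpos, Real.rpow_one]
    have e1 := hgeo1 s
    have e2 := hgeo2 s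
    rw [h5] at e1
    have hx5 : r s * (2 * (r s) ^ 4 * deriv (deriv r) s)
        = r s * (C * (2 * r s - μ * ((d:ℝ) - 1) * (r s) ^ ((4:ℝ) - d))) := by
      linear_combination r s * e2 - 4 * e1
    exact mul_left_cancel₀ hxne hx5
  -- second derivative of (r - p)^2 is nonnegative
  have hkey2 : ∀ s, 0 ≤ (r s - p) * deriv (deriv r) s := by
    intro s
    have h2 := hsecond s
    have h3 : 0 ≤ (r s - p) * (C * (2 * r s - μ * ((d:ℝ) - 1) * (r s) ^ ((4:ℝ) - d))) := by
      have h4 := mul_nonneg hC.le (key s)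
      nlinarith [h4]
    have h5 : ((r s - p) * deriv (deriv r) s) * (2 * (r s) ^ 4)
        = (r s - p) * (C * (2 * r s - μ * ((d:ℝ) - 1) * (r s) ^ ((4:ℝ) - d))) := by
      linear_combination (r s - p) * h2
    have h6 : (0:ℝ) < 2 * (r s) ^ 4 := by
      have h7 := pow_pos (hrpos s) 4
      linarith
    nlinarith [h3, h5, h6]
  -- the auxiliary function v = (r - p)^2 and its derivatives
  set g : ℝ → ℝ := fun s => 2 * (r s - p) * deriv r s with hgdef
  have hv : ∀ s, HasDerivAt (fun t => (r t - p) ^ 2) (g s) s := by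
    intro s
    have h1 : HasDerivAt (fun t => r t - p) (deriv r s) s :=
      ((hr s).hasDerivAt).sub_const p
    have h2 := h1.pow 2
    refine h2.congr_deriv ?_
    simp only [hgdef]
    norm_num
    try ring
  have hg : ∀ s, HasDerivAt g (2 * (deriv r s) ^ 2 + 2 * (r s - p) * deriv (deriv r) s) s := by
    intro s
    have h1 : HasDerivAt (fun t => r t - p) (deriv r s) s :=
      ((hr s).hasDerivAt).sub_const p
    have h2 : HasDerivAt (deriv r) (deriv (deriv r) s) s := (hr' s).hasDerivAt
    have h3 := (h1.mul h2).const_mul (2:ℝ)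
    refine (h3.congr_deriv (by ring)).congr_of_eventuallyEq (Filter.Eventually.of_forall fun t => ?_)
    simp only [hgdef, Pi.mul_apply]; ring
  have hgmono : Monotone g := by
    have hgd : Differentiable ℝ g := fun s => (hg s).differentiableAt
    apply monotone_of_deriv_nonneg hgd
    intro s
    rw [(hg s).deriv]
    have h1 := hkey2 s
    nlinarith [sq_nonneg (deriv r s)]
  -- v is bounded above
  have hvb : ∀ s, (r s - p) ^ 2 ≤ (a - p) ^ 2 + (b - p) ^ 2 := by
    intro s
    obtain ⟨h1, h2⟩ := hbound s
    nlinarith [mul_nonneg (sub_nonneg.2 h1) (sub_nonneg.2 h2), sq_nonneg (a + b - r s - p)]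
  -- hence g ≡ 0
  have hg0 : ∀ s, g s = 0 :=
    deriv_eq_zero_of_monotone_deriv_of_bddAbove _ g hv hgmono ((a - p) ^ 2 + (b - p) ^ 2) hvb
  -- deriv g ≡ 0, hence r' ≡ 0
  have hgfun : g = fun _ => (0:ℝ) := funext hg0
  have hdg0 : ∀ s, 2 * (deriv r s) ^ 2 + 2 * (r s - p) * deriv (deriv r) s = 0 := by
    intro s
    have h1 := (hg s).deriv
    rw [hgfun] at h1
    simpa using h1.symm
  have hr0 : ∀ s, deriv r s = 0 := by
    intro s
    have h1 := hdg0 s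
    have h2 := hkey2 s
    nlinarith [sq_nonneg (deriv r s)]
  have hrderiv : deriv r = fun _ => (0:ℝ) := funext hr0
  have hr''0 : ∀ s, deriv (deriv r) s = 0 := by
    intro s
    rw [hrderiv]
    simp
  -- final algebra
  intro s
  have hxpos : 0 < r s := hrpos s
  have hxne : r s ≠ 0 := ne_of_gt hxpos
  have hy : (0:ℝ) < (r s) ^ ((4:ℝ) - d) := Real.rpow_pos_of_pos hxpos _
  have h5 : (r s) ^ ((5:ℝ) - d) = (r s) ^ ((4:ℝ) - d) * r s := by
    rw [show ((5:ℝ) - (d:ℝ)) = ((4:ℝ) - d) + 1 by ring, Real.rpow_add hxpos, Real.rpow_one]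
  have e1 := hgeo1 s
  have e2 := hgeo2 s
  rw [hr0 s, h5] at e1
  rw [hr0 s, hr''0 s] at e2
  have h0 : C * (2 * (r s) ^ 2 - μ * ((d:ℝ) - 1) * ((r s) ^ ((4:ℝ) - d) * r s)) = 0 := by
    linear_combination 4 * e1 - r s * e2
  have h0' : 2 * (r s) ^ 2 - μ * ((d:ℝ) - 1) * ((r s) ^ ((4:ℝ) - d) * r s) = 0 := by
    rcases mul_eq_zero.1 h0 with h | h
    · exact absurd h (ne_of_gt hC)
    · exact h
  have h1 : (r s) ^ ((d:ℝ) - 3) * (r s) ^ ((4:ℝ) - d) = r s := by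
    rw [← Real.rpow_add hxpos, show ((d:ℝ) - 3) + ((4:ℝ) - d) = 1 by ring, Real.rpow_one]
  have hxd : (r s) ^ ((d:ℝ) - 3) = μ * ((d:ℝ) - 1) / 2 := by
    have h3 : (r s) ^ ((d:ℝ) - 3) * (2 * ((r s) ^ ((4:ℝ) - d) * r s))
        = (μ * ((d:ℝ) - 1) / 2) * (2 * ((r s) ^ ((4:ℝ) - d) * r s)) := by
      have h2 : ((r s) ^ ((d:ℝ) - 3) * (r s) ^ ((4:ℝ) - d)) * r s = (r s) * (r s) := by
        rw [h1]
      linear_combination 2 * h2 + h0'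
    have h4 : (2 * ((r s) ^ ((4:ℝ) - d) * r s)) ≠ 0 :=
      ne_of_gt (mul_pos two_pos (mul_pos hy hxpos))
    exact mul_right_cancel₀ h4 h3
  calc r s = ((r s) ^ ((d:ℝ) - 3)) ^ ((1:ℝ) / ((d:ℝ) - 3)) := by
        rw [← Real.rpow_mul hxpos.le, mul_one_div, div_self hd3ne, Real.rpow_one]
    _ = p := by rw [hxd, hpdef]
end

section
/- Fix an integer d ≥ 4 and reals μ > 0, C > 0, E. If V_eff(r_P) < 0, where V_eff(r) := (C/r²)(1 − μ r^(3−d)) − E² and r_P := (μ(d−1)/2)^(1/(d−3)), then V_eff(r) < 0 for every r > 0; equivalently, R(r) := −r⁴ V_eff(r) is strictly positive for every r > 0. -/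
/-- Weighted AM-GM style polynomial inequality: for `k ≥ 1` and `x ≥ 0`,
`(k+2) x^k ≤ k x^(k+2) + 2`. -/
lemma key_ineq : ∀ (k : ℕ), 1 ≤ k → ∀ x : ℝ, 0 ≤ x →
    ((k : ℝ) + 2) * x ^ k ≤ (k : ℝ) * x ^ (k + 2) + 2 := by
  intro k hk
  induction k, hk using Nat.le_induction with
  | base =>
    intro x hx
    push_cast
    nlinarith [sq_nonneg (x - 1), hx]
  | succ n hn ih =>
    intro x hx
    have IH := ih x hx
    have hxn : (0 : ℝ) ≤ x ^ n := pow_nonneg hx n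
    have hprod : 0 ≤ (x - 1) * (x ^ n * x * (x + 1) - 2) := by
      rcases le_total x 1 with h | h
      · have h1 : x ^ n ≤ 1 := pow_le_one₀ hx h
        have h2 : x ^ n * x ≤ 1 := by nlinarith
        have h3 : x ^ n * x * x ≤ 1 := by nlinarith
        nlinarith [mul_nonneg (sub_nonneg.2 h) (sub_nonneg.2 h2),
          mul_nonneg (sub_nonneg.2 h) (sub_nonneg.2 h3)]
      · have h1 : 1 ≤ x ^ n := one_le_pow₀ h
        have h2 : 1 ≤ x ^ n * x := by nlinarith
        have h3 : 1 ≤ x ^ n * x * x := by nlinarith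
        nlinarith [mul_nonneg (sub_nonneg.2 h) (sub_nonneg.2 h2),
          mul_nonneg (sub_nonneg.2 h) (sub_nonneg.2 h3)]
    have e1 : x ^ (n + 1) = x ^ n * x := by ring
    have e2 : x ^ (n + 2) = x ^ n * x ^ 2 := by ring
    have e3 : x ^ (n + 1 + 2) = x ^ n * x ^ 3 := by ring
    rw [e2] at IH
    push_cast
    rw [e1, e3]
    nlinarith [mul_le_mul_of_nonneg_left IH hx]

/-- Fix an integer `d ≥ 4` and reals `μ > 0`, `C > 0`, `E`. If `V_eff(r_P) < 0`, then
`V_eff(r) < 0` for every `r > 0`; equivalently, `R(r) = −r⁴ V_eff(r)` is strictly positive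
for every `r > 0`. -/
theorem effective_potential_neg_everywhere (d : ℕ) (hd : 4 ≤ d) (μ C E : ℝ)
    (hμ : 0 < μ) (hC : 0 < C)
    (Veff : ℝ → ℝ)
    (hV : ∀ r : ℝ, Veff r = (C / r ^ 2) * (1 - μ * r ^ ((3 : ℝ) - d)) - E ^ 2)
    (rP : ℝ) (hrP : rP = (μ * ((d : ℝ) - 1) / 2) ^ ((1 : ℝ) / ((d : ℝ) - 3)))
    (hneg : Veff rP < 0) :
    ∀ r : ℝ, 0 < r → Veff r < 0 ∧ 0 < -(r ^ 4 * Veff r) := by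
  obtain ⟨k, rfl⟩ : ∃ k, d = k + 3 := ⟨d - 3, by omega⟩
  have hk : 1 ≤ k := by omega
  have hkR : (1 : ℝ) ≤ (k : ℝ) := by exact_mod_cast hk
  -- the base of the rpow defining rP
  have hbpos : 0 < μ * ((↑(k + 3) : ℝ) - 1) / 2 := by
    push_cast; nlinarith
  have hppos : 0 < rP := by
    rw [hrP]; exact Real.rpow_pos_of_pos hbpos _
  have hpk : rP ^ k = μ * ((k : ℝ) + 2) / 2 := by
    rw [hrP]
    have h1 : ((↑(k + 3) : ℝ)) - 3 = (k : ℝ) := by push_cast; ring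
    have h2 : μ * ((↑(k + 3) : ℝ) - 1) / 2 = μ * ((k : ℝ) + 2) / 2 := by push_cast; ring
    rw [h1, h2, one_div]
    exact Real.rpow_inv_natCast_pow (by nlinarith) (by omega)
  have hμeq : μ * ((k : ℝ) + 2) = 2 * rP ^ k := by rw [hpk]; ring
  -- rewrite Veff in terms of natural powers
  have hVeff : ∀ s : ℝ, 0 < s → Veff s = (C * s ^ k - C * μ) / s ^ (k + 2) - E ^ 2 := by
    intro s hs
    rw [hV s]
    have he : (3 : ℝ) - (↑(k + 3) : ℝ) = -(k : ℝ) := by push_cast; ring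
    rw [he, Real.rpow_neg hs.le, Real.rpow_natCast]
    have hsk : s ^ k ≠ 0 := by positivity
    have hs2 : s ^ 2 ≠ 0 := by positivity
    field_simp
    ring
  -- the main comparison: Veff r ≤ Veff rP for all r > 0
  have main : ∀ r : ℝ, 0 < r → Veff r ≤ Veff rP := by
    intro r hr
    rw [hVeff r hr, hVeff rP hppos]
    have hkey := key_ineq k hk (r / rP) (by positivity)
    have hp2 : (0 : ℝ) < rP ^ (2 * k + 2) := by positivity
    have hm := mul_le_mul_of_nonneg_right hkey hp2.le
    have e1 : (r / rP) ^ k * rP ^ (2 * k + 2) = r ^ k * (rP ^ k * rP ^ 2) := by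
      rw [div_pow]; field_simp; ring
    have e2 : (r / rP) ^ (k + 2) * rP ^ (2 * k + 2) = r ^ k * r ^ 2 * rP ^ k := by
      rw [div_pow]
      have : rP ^ (k + 2) ≠ 0 := by positivity
      field_simp
      ring
    have hkey' : ((k : ℝ) + 2) * (r ^ k * (rP ^ k * rP ^ 2)) ≤
        (k : ℝ) * (r ^ k * r ^ 2 * rP ^ k) + 2 * (rP ^ k * (rP ^ k * rP ^ 2)) := by
      have e3 : rP ^ (2 * k + 2) = rP ^ k * (rP ^ k * rP ^ 2) := by ring
      nlinarith [hm, e1, e2, e3]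
    have hsub : (C * r ^ k - C * μ) / r ^ (k + 2) ≤ (C * rP ^ k - C * μ) / rP ^ (k + 2) := by
      rw [div_le_div_iff₀ (by positivity) (by positivity)]
      have hb1 : μ * ((k : ℝ) + 2) * (C * (rP ^ k * rP ^ 2)) =
          2 * rP ^ k * (C * (rP ^ k * rP ^ 2)) := by rw [hμeq]
      have hb2 : μ * ((k : ℝ) + 2) * (C * (r ^ k * r ^ 2)) =
          2 * rP ^ k * (C * (r ^ k * r ^ 2)) := by rw [hμeq]
      have hc := mul_le_mul_of_nonneg_left hkey' hC.le
      have er : r ^ (k + 2) = r ^ k * r ^ 2 := by ring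
      have ep : rP ^ (k + 2) = rP ^ k * rP ^ 2 := by ring
      rw [er, ep]
      nlinarith [hc, hb1, hb2, hkR]
    linarith
  intro r hr
  have h1 : Veff r < 0 := lt_of_le_of_lt (main r hr) hneg
  refine ⟨h1, ?_⟩
  have h2 : r ^ 4 * Veff r < 0 := mul_neg_of_pos_of_neg (by positivity) h1
  linarith
end

section
/- Fix an integer d ≥ 4 and reals μ > 0, C > 0, E. The effective potential V_eff(r) := (C/r²)(1 − μ r^(3−d)) − E² has two distinct zeros in the open interval (r_H, ∞), where r_H := μ^(1/(d−3)), if and only if E ≠ 0 and V_eff(r_P) > 0, where r_P := (μ(d−1)/2)^(1/(d−3)). -/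
/-- Fix an integer `d ≥ 4` and reals `μ > 0`, `C > 0`, `E`. The effective potential
`V_eff(r) = (C/r²)(1 − μ r^(3−d)) − E²` has two distinct zeros in the open interval
`(r_H, ∞)`, where `r_H = μ^(1/(d−3))`, if and only if `E ≠ 0` and `V_eff(r_P) > 0`,
where `r_P = (μ(d−1)/2)^(1/(d−3))`. -/
theorem two_zeros_iff (d : ℕ) (hd : 4 ≤ d) (μ C E : ℝ)
    (hμ : 0 < μ) (hC : 0 < C)
    (Veff : ℝ → ℝ)
    (hV : ∀ r : ℝ, Veff r = (C / r ^ 2) * (1 - μ * r ^ ((3 : ℝ) - d)) - E ^ 2)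
    (rH : ℝ) (hrH : rH = μ ^ ((1 : ℝ) / ((d : ℝ) - 3)))
    (rP : ℝ) (hrP : rP = (μ * ((d : ℝ) - 1) / 2) ^ ((1 : ℝ) / ((d : ℝ) - 3))) :
    (∃ r₁ r₂ : ℝ, r₁ ∈ Set.Ioi rH ∧ r₂ ∈ Set.Ioi rH ∧ r₁ ≠ r₂ ∧
        Veff r₁ = 0 ∧ Veff r₂ = 0) ↔
      (E ≠ 0 ∧ 0 < Veff rP) := by
  have hdR : (4 : ℝ) ≤ (d : ℝ) := by exact_mod_cast hd
  have hd3 : (0 : ℝ) < (d : ℝ) - 3 := by linarith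
  set e : ℝ := (3 : ℝ) - d with he
  have heneg : e < 0 := by rw [he]; linarith
  set A : ℝ := μ * ((d : ℝ) - 1) / 2 with hA
  have hd1 : (0 : ℝ) < (d : ℝ) - 1 := by linarith
  have hA0 : 0 < A := by rw [hA]; positivity
  have hμA : μ < A := by rw [hA]; nlinarith
  have hrH0 : 0 < rH := hrH ▸ Real.rpow_pos_of_pos hμ _
  have hrP0 : 0 < rP := hrP ▸ Real.rpow_pos_of_pos hA0 _
  have hHP : rH < rP := by
    rw [hrH, hrP]
    exact Real.rpow_lt_rpow hμ.le hμA (by positivity)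
  have hexp : (1 / ((d : ℝ) - 3)) * e = -1 := by rw [he]; field_simp; ring
  have hrHe : rH ^ e = μ⁻¹ := by
    rw [hrH, ← Real.rpow_mul hμ.le, hexp, Real.rpow_neg_one]
  have hrPe : rP ^ e = A⁻¹ := by
    rw [hrP, ← Real.rpow_mul hA0.le, hexp, Real.rpow_neg_one]
  -- derivative
  set D : ℝ → ℝ := fun r => C / r ^ 3 * (μ * ((d : ℝ) - 1) * r ^ e - 2) with hDdef
  have hderiv : ∀ r : ℝ, 0 < r → HasDerivAt Veff (D r) r := by
    intro r hr
    have hfun : Veff = fun r : ℝ => (C / r ^ 2) * (1 - μ * r ^ e) - E ^ 2 :=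
      funext hV
    have h0 : HasDerivAt (fun x : ℝ => x ^ 2) (2 * r) r := by
      simpa using hasDerivAt_pow 2 r
    have h1 : HasDerivAt (fun x : ℝ => C / x ^ 2)
        ((0 * r ^ 2 - C * (2 * r)) / (r ^ 2) ^ 2) r :=
      (hasDerivAt_const r C).div h0 (pow_ne_zero 2 hr.ne')
    have h2 : HasDerivAt (fun x : ℝ => x ^ e) (e * r ^ (e - 1)) r :=
      Real.hasDerivAt_rpow_const (Or.inl hr.ne')
    have h3 : HasDerivAt (fun x : ℝ => 1 - μ * x ^ e) (-(μ * (e * r ^ (e - 1)))) r :=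
      (h2.const_mul μ).const_sub 1
    have h4 := (h1.mul h3).sub_const (E ^ 2)
    rw [hfun]
    refine HasDerivAt.congr_deriv h4 ?_
    have hsub : r ^ (e - 1) = r ^ e / r := by
      rw [Real.rpow_sub hr, Real.rpow_one]
    rw [hDdef, hsub, he]
    field_simp
    ring
  have hcontAt : ∀ r : ℝ, 0 < r → ContinuousAt Veff r := fun r hr =>
    (hderiv r hr).continuousAt
  -- sign of derivative
  have h2A : μ * ((d : ℝ) - 1) = 2 * A := by rw [hA]; ring
  have hDpos : ∀ r : ℝ, 0 < r → r < rP → 0 < D r := by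
    intro r hr0 hrp
    have h1 : rP ^ e < r ^ e := Real.rpow_lt_rpow_of_neg hr0 hrp heneg
    rw [hrPe] at h1
    have h2 : 2 * A * A⁻¹ < 2 * A * r ^ e :=
      mul_lt_mul_of_pos_left h1 (by positivity)
    rw [mul_inv_cancel_right₀ hA0.ne'] at h2
    have h5 : 0 < C / r ^ 3 := by positivity
    rw [hDdef]
    have : 0 < μ * ((d : ℝ) - 1) * r ^ e - 2 := by rw [h2A]; linarith
    exact mul_pos h5 this
  have hDneg : ∀ r : ℝ, rP < r → D r < 0 := by
    intro r hrp
    have hr0 : 0 < r := hrP0.trans hrp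
    have h1 : r ^ e < rP ^ e := Real.rpow_lt_rpow_of_neg hrP0 hrp heneg
    rw [hrPe] at h1
    have h2 : 2 * A * r ^ e < 2 * A * A⁻¹ :=
      mul_lt_mul_of_pos_left h1 (by positivity)
    rw [mul_inv_cancel_right₀ hA0.ne'] at h2
    have h5 : 0 < C / r ^ 3 := by positivity
    rw [hDdef]
    have : μ * ((d : ℝ) - 1) * r ^ e - 2 < 0 := by rw [h2A]; linarith
    exact mul_neg_of_pos_of_neg h5 this
  -- monotonicity
  have hmono : StrictMonoOn Veff (Set.Icc rH rP) := by
    refine strictMonoOn_of_deriv_pos (convex_Icc _ _)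
      (fun x hx => (hcontAt x (hrH0.trans_le hx.1)).continuousWithinAt) ?_
    intro x hx
    rw [interior_Icc] at hx
    have hx0 : 0 < x := hrH0.trans hx.1
    rw [(hderiv x hx0).deriv]
    exact hDpos x hx0 hx.2
  have hanti : StrictAntiOn Veff (Set.Ici rP) := by
    refine strictAntiOn_of_deriv_neg (convex_Ici _)
      (fun x hx => (hcontAt x (hrP0.trans_le hx)).continuousWithinAt) ?_
    intro x hx
    rw [interior_Ici] at hx
    rw [(hderiv x (hrP0.trans hx)).deriv]
    exact hDneg x hx
  have hVrH : Veff rH = -E ^ 2 := by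
    rw [hV, hrHe, mul_inv_cancel₀ hμ.ne']
    ring
  have hEz : ∀ r : ℝ, rH < r → Veff r = 0 → E ≠ 0 := by
    intro r hr hz hE0
    have hr0 : 0 < r := hrH0.trans hr
    have h1 : r ^ e < rH ^ e := Real.rpow_lt_rpow_of_neg hrH0 hr heneg
    rw [hrHe] at h1
    have h2 : μ * r ^ e < μ * μ⁻¹ := mul_lt_mul_of_pos_left h1 hμ
    rw [mul_inv_cancel₀ hμ.ne'] at h2
    have hpos : 0 < Veff r := by
      rw [hV r, hE0]
      have h3 : 0 < C / r ^ 2 := by positivity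
      nlinarith
    exact absurd hz hpos.ne'
  constructor
  · rintro ⟨r₁, r₂, h1, h2, hne, hz1, hz2⟩
    simp only [Set.mem_Ioi] at h1 h2
    have key : ∀ a b : ℝ, rH < a → rH < b → a < b →
        Veff a = 0 → Veff b = 0 → 0 < Veff rP := by
      intro a b ha hb hab hza hzb
      rcases le_or_gt b rP with hbP | hbP
      · have := hmono ⟨ha.le, hab.le.trans hbP⟩ ⟨hb.le, hbP⟩ hab
        rw [hza, hzb] at this
        exact absurd this (lt_irrefl 0)
      · rcases le_or_gt rP a with haP | haP
        · have := hanti (Set.mem_Ici.2 haP) (Set.mem_Ici.2 (haP.trans hab.le)) hab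
          rw [hza, hzb] at this
          exact absurd this (lt_irrefl 0)
        · have := hanti Set.self_mem_Ici (Set.mem_Ici.2 hbP.le) hbP
          rw [hzb] at this
          exact this
    refine ⟨hEz r₁ h1 hz1, ?_⟩
    rcases hne.lt_or_gt with h | h
    · exact key r₁ r₂ h1 h2 h hz1 hz2
    · exact key r₂ r₁ h2 h1 h hz2 hz1
  · rintro ⟨hE, hP⟩
    have hE2 : 0 < E ^ 2 := by positivity
    have hVH : Veff rH < 0 := by rw [hVrH]; linarith
    have hcont1 : ContinuousOn Veff (Set.Icc rH rP) := fun x hx =>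
      (hcontAt x (hrH0.trans_le hx.1)).continuousWithinAt
    obtain ⟨r₁, hr₁m, hr₁z⟩ := intermediate_value_Ioo hHP.le hcont1
      (Set.mem_Ioo.2 ⟨hVH, hP⟩)
    set R : ℝ := max (rP + 1) (Real.sqrt (C / E ^ 2) + 1) with hRdef
    have hPR : rP < R := lt_of_lt_of_le (by linarith) (le_max_left _ _)
    have hR0 : 0 < R := hrP0.trans hPR
    have hsR : Real.sqrt (C / E ^ 2) < R :=
      lt_of_lt_of_le (by linarith) (le_max_right _ _)
    have hCR : C / E ^ 2 < R ^ 2 := (Real.sqrt_lt' hR0).1 hsR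
    have hCE : C / R ^ 2 < E ^ 2 := by
      rw [div_lt_iff₀ hE2] at hCR
      rw [div_lt_iff₀ (by positivity : (0 : ℝ) < R ^ 2)]
      linarith
    have hVR : Veff R < 0 := by
      rw [hV]
      have h1 : 0 < μ * R ^ e := by positivity
      have h2 : 0 < C / R ^ 2 := by positivity
      nlinarith
    have hcont2 : ContinuousOn Veff (Set.Icc rP R) := fun x hx =>
      (hcontAt x (hrP0.trans_le hx.1)).continuousWithinAt
    obtain ⟨r₂, hr₂m, hr₂z⟩ := intermediate_value_Ioo' hPR.le hcont2
      (Set.mem_Ioo.2 ⟨hVR, hP⟩)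
    exact ⟨r₁, r₂, hr₁m.1, hHP.trans hr₂m.1,
      ne_of_lt (hr₁m.2.trans hr₂m.1), hr₁z, hr₂z⟩
end
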